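/- Let h = 2k+1 be odd and let A be the adjacency matrix of a regular tournament of order h with valency k. Let D be the (2h+2)×(2h+2) integer matrix given in block form (with blocks of sizes 1, h, 1, h) by D = [[0, 𝟏ᵀ, 0, 𝟎ᵀ], [𝟎, A, 𝟏, Aᵀ], [0, 𝟎ᵀ, 0, 𝟏ᵀ], [𝟏, Aᵀ, 𝟎, A]], where 𝟎 and 𝟏 denote the h-dimensional all-zeros and all-ones column vectors. Then D·Dᵀ = Dᵀ·D and D·D + D·Dᵀ + D + Dᵀ = h·J, where J is the (2h+2)×(2h+2) all-ones matrix. -/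
import Mathlib


open Matrix Kronecker

/-- The all-ones square matrix over `ℤ` indexed by `α`. -/
def allOnes (α : Type*) : Matrix α α ℤ := Matrix.of fun _ _ => 1

/-- `B` is the adjacency matrix of a directed strongly regular graph
with parameters `(n, k, t, l, m)`. -/
def IsAdjDSRG {α : Type*} [Fintype α] [DecidableEq α]
    (B : Matrix α α ℤ) (n k t l m : ℤ) : Prop :=
  (Fintype.card α : ℤ) = n ∧
  (∀ i j, B i j = 0 ∨ B i j = 1) ∧
  (∀ i, B i i = 0) ∧
  B * B = t • (1 : Matrix α α ℤ) + l • B + m • (allOnes α - 1 - B) ∧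
  B * allOnes α = k • allOnes α ∧
  allOnes α * B = k • allOnes α

/-- `A` is the adjacency matrix of a regular tournament of order `n` with valency `k`. -/
def IsRegularTournament {n : ℕ} (k : ℕ) (A : Matrix (Fin n) (Fin n) ℤ) : Prop :=
  (∀ i j, A i j = 0 ∨ A i j = 1) ∧
  (∀ i, A i i = 0) ∧
  A + Aᵀ = allOnes (Fin n) - 1 ∧
  A * allOnes (Fin n) = (k : ℤ) • allOnes (Fin n) ∧
  allOnes (Fin n) * A = (k : ℤ) • allOnes (Fin n)

/-- The block matrix `M(X) = [[X, Xᵀ + I], [X + I, Xᵀ]]`. -/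
def MBlock {α : Type*} [DecidableEq α] (X : Matrix α α ℤ) :
    Matrix (α ⊕ α) (α ⊕ α) ℤ :=
  Matrix.fromBlocks X (Xᵀ + 1) (X + 1) Xᵀ

private lemma allOnes_mul_allOnes (α : Type*) [Fintype α] :
    allOnes α * allOnes α = (Fintype.card α : ℤ) • allOnes α := by
  ext i j
  simp [allOnes, Matrix.mul_apply, Matrix.smul_apply]

private lemma key_calc {β : Type*} [Fintype β] [DecidableEq β]
    (E : Matrix β β ℤ) (h : ℕ) (hS : E + Eᵀ = allOnes β - 1)
    (hcard : (Fintype.card β : ℤ) = (h : ℤ) + 1) :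
    E * E + Eᵀ * Eᵀ + (E * Eᵀ + Eᵀ * E) + E + Eᵀ = (h : ℤ) • allOnes β := by
  have expand : E * E + Eᵀ * Eᵀ + (E * Eᵀ + Eᵀ * E) + E + Eᵀ
      = (E + Eᵀ) * (E + Eᵀ) + (E + Eᵀ) := by noncomm_ring
  rw [expand, hS]
  have hJ : allOnes β * allOnes β = ((h : ℤ) + 1) • allOnes β := by
    rw [allOnes_mul_allOnes, hcard]
  have : (allOnes β - 1) * (allOnes β - 1) + (allOnes β - 1)
      = allOnes β * allOnes β - allOnes β := by noncomm_ring
  rw [this, hJ, add_smul, one_smul]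
  abel


/-- For a regular tournament `A` of odd order `h = 2k+1` and the
`(2h+2)×(2h+2)` matrix `D = [[0, 𝟏ᵀ, 0, 𝟎ᵀ], [𝟎, A, 𝟏, Aᵀ], [0, 𝟎ᵀ, 0, 𝟏ᵀ],
[𝟏, Aᵀ, 𝟎, A]]`, one has `D·Dᵀ = Dᵀ·D` and `D·D + D·Dᵀ + D + Dᵀ = h·J`. -/
theorem stmt10 (k : ℕ)
    (A : Matrix (Fin (2 * k + 1)) (Fin (2 * k + 1)) ℤ)
    (hA : IsRegularTournament k A) :
    let h : ℕ := 2 * k + 1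
    let E : Matrix (Fin 1 ⊕ Fin (2 * k + 1)) (Fin 1 ⊕ Fin (2 * k + 1)) ℤ :=
      Matrix.fromBlocks 0 (Matrix.of fun _ _ => 1) 0 A
    let F : Matrix (Fin 1 ⊕ Fin (2 * k + 1)) (Fin 1 ⊕ Fin (2 * k + 1)) ℤ :=
      Matrix.fromBlocks 0 0 (Matrix.of fun _ _ => 1) Aᵀ
    let D := Matrix.fromBlocks E F F E
    D * Dᵀ = Dᵀ * D ∧
    D * D + D * Dᵀ + D + Dᵀ =
      (h : ℤ) • allOnes ((Fin 1 ⊕ Fin (2 * k + 1)) ⊕ (Fin 1 ⊕ Fin (2 * k + 1))) := by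
  intro h E F D
  obtain ⟨h01, hdiag, hsum, hrow, hcol⟩ := hA
  have hF : F = Eᵀ := by
    ext (i | i) (j | j) <;>
      simp [E, F, Matrix.fromBlocks, Matrix.transpose_apply]
  have hD : D = Matrix.fromBlocks E Eᵀ Eᵀ E := by rw [show D = Matrix.fromBlocks E F F E from rfl, hF]
  have hS : E + Eᵀ = allOnes (Fin 1 ⊕ Fin (2 * k + 1)) - 1 := by
    have hsum' : ∀ i j, A i j + A j i = (allOnes (Fin (2*k+1)) - 1) i j := fun i j => by
      have := congrFun (congrFun hsum i) j
      simpa using this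
    ext (i | i) (j | j) <;>
      simp [E, Matrix.fromBlocks, allOnes, Matrix.one_apply, Matrix.transpose_apply]
    · simp [Subsingleton.elim i j]
    · have := hsum' i j
      simp [allOnes, Matrix.one_apply] at this
      rw [this]
  have hcard : (Fintype.card (Fin 1 ⊕ Fin (2 * k + 1)) : ℤ) = (h : ℤ) + 1 := by
    simp [h]; ring
  have hblock := key_calc E h hS hcard
  constructor
  · rw [hD]
    simp only [Matrix.fromBlocks_transpose, Matrix.fromBlocks_multiply,
      Matrix.transpose_transpose]
    congr 1 <;> abel
  · rw [hD]
    have hJ4 : allOnes ((Fin 1 ⊕ Fin (2 * k + 1)) ⊕ (Fin 1 ⊕ Fin (2 * k + 1)))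
        = Matrix.fromBlocks (allOnes _) (allOnes _) (allOnes _) (allOnes _) := by
      ext (i | i) (j | j) <;> rfl
    rw [hJ4]
    simp only [Matrix.fromBlocks_transpose, Matrix.fromBlocks_multiply,
      Matrix.fromBlocks_add, Matrix.transpose_transpose, Matrix.fromBlocks_smul]
    congr 1 <;> (rw [← hblock]; abel)
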